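/- Let p, q : ℝ → (0,∞) be twice continuously differentiable Lebesgue probability densities and let w : ℝ → [0,∞) be continuously differentiable with compact support. Define the weighted Hyvärinen score Ŝ(p,x;w) = 2·(p''(x)/p(x))·w(x) − (p'(x)/p(x))²·w(x) + 2·(p'(x)/p(x))·w'(x). Then ∫_ℝ Ŝ(p,x;w)·q(x) dx − ∫_ℝ Ŝ(q,x;w)·q(x) dx = ∫_ℝ (p'(x)/p(x) − q'(x)/q(x))²·q(x)·w(x) dx ≥ 0. -/

import Mathlib

open MeasureTheory

noncomputable section

/-- The weighted Hyvärinen score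
`Ŝ(f,x;w) = 2·(f''(x)/f(x))·w(x) − (f'(x)/f(x))²·w(x) + 2·(f'(x)/f(x))·w'(x)`. -/
def ShatR (w f : ℝ → ℝ) (x : ℝ) : ℝ :=
  2 * (deriv (deriv f) x / f x) * w x - (deriv f x / f x) ^ 2 * w x
    + 2 * (deriv f x / f x) * deriv w x

/-- For twice continuously differentiable positive Lebesgue probability
densities `p, q` on `ℝ` and a continuously differentiable nonnegative weight function `w`
with compact support, the expected weighted Hyvärinen score difference under `q` equals
`∫ (p'/p − q'/q)²·q·w ≥ 0`. -/
theorem weighted_hyvarinen_divergence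
    (p q w : ℝ → ℝ)
    (hp : ContDiff ℝ 2 p) (hq : ContDiff ℝ 2 q)
    (hppos : ∀ x, 0 < p x) (hqpos : ∀ x, 0 < q x)
    (hpInt : ∫ x, p x = 1) (hqInt : ∫ x, q x = 1)
    (hw : ContDiff ℝ 1 w) (hwpos : ∀ x, 0 ≤ w x) (hwsupp : HasCompactSupport w) :
    (∫ x, ShatR w p x * q x) - (∫ x, ShatR w q x * q x)
        = ∫ x, (deriv p x / p x - deriv q x / q x) ^ 2 * q x * w x ∧
      0 ≤ ∫ x, (deriv p x / p x - deriv q x / q x) ^ 2 * q x * w x := by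
  have hp1 : ContDiff ℝ 1 p := hp.of_le (by norm_num)
  have hq1 : ContDiff ℝ 1 q := hq.of_le (by norm_num)
  have hp' : ContDiff ℝ 1 (deriv p) :=
    ((contDiff_succ_iff_deriv (n := 1)).mp (by exact_mod_cast hp)).2.2
  have hq' : ContDiff ℝ 1 (deriv q) :=
    ((contDiff_succ_iff_deriv (n := 1)).mp (by exact_mod_cast hq)).2.2
  have hpne : ∀ x, p x ≠ 0 := fun x => (hppos x).ne'
  have hqne : ∀ x, q x ≠ 0 := fun x => (hqpos x).ne'
  have hP : ContDiff ℝ 1 (fun x => deriv p x / p x) := hp'.div hp1 hpne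
  have hQ : ContDiff ℝ 1 (fun x => deriv q x / q x) := hq'.div hq1 hqne
  -- derivative of log-derivative
  have hPderiv : ∀ x, HasDerivAt (fun y => deriv p y / p y)
      (deriv (deriv p) x / p x - (deriv p x / p x) ^ 2) x := by
    intro x
    have h1 : HasDerivAt (deriv p) (deriv (deriv p) x) x :=
      ((hp'.differentiable one_ne_zero) x).hasDerivAt
    have h2 : HasDerivAt p (deriv p x) x :=
      ((hp1.differentiable one_ne_zero) x).hasDerivAt
    have hne : p x ≠ 0 := hpne x
    refine (h1.div h2 hne).congr_deriv ?_
    field_simp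
  have hQderiv : ∀ x, HasDerivAt (fun y => deriv q y / q y)
      (deriv (deriv q) x / q x - (deriv q x / q x) ^ 2) x := by
    intro x
    have h1 : HasDerivAt (deriv q) (deriv (deriv q) x) x :=
      ((hq'.differentiable one_ne_zero) x).hasDerivAt
    have h2 : HasDerivAt q (deriv q x) x :=
      ((hq1.differentiable one_ne_zero) x).hasDerivAt
    have hne : q x ≠ 0 := hqne x
    refine (h1.div h2 hne).congr_deriv ?_
    field_simp
  -- the auxiliary function g
  set g : ℝ → ℝ := fun x => 2 * (deriv p x / p x - deriv q x / q x) * w x * q x with hg_def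
  have hgC : ContDiff ℝ 1 g :=
    (((contDiff_const.mul (hP.sub hQ)).mul hw).mul hq1)
  have hgsupp : HasCompactSupport g := by
    have : g = (fun x => 2 * (deriv p x / p x - deriv q x / q x)) * w * q := rfl
    rw [this]
    exact (hwsupp.mul_left).mul_right
  -- derivative of g
  have hgderiv : ∀ x, HasDerivAt g
      ((2 * ((deriv (deriv p) x / p x - (deriv p x / p x) ^ 2)
            - (deriv (deriv q) x / q x - (deriv q x / q x) ^ 2)) * w x
          + 2 * (deriv p x / p x - deriv q x / q x) * deriv w x) * q x
        + 2 * (deriv p x / p x - deriv q x / q x) * w x * deriv q x) x := by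
    intro x
    have hA : HasDerivAt (fun y => 2 * (deriv p y / p y - deriv q y / q y))
        (2 * ((deriv (deriv p) x / p x - (deriv p x / p x) ^ 2)
            - (deriv (deriv q) x / q x - (deriv q x / q x) ^ 2))) x :=
      ((hPderiv x).sub (hQderiv x)).const_mul 2
    have hwd : HasDerivAt w (deriv w x) x := ((hw.differentiable one_ne_zero) x).hasDerivAt
    have hqd : HasDerivAt q (deriv q x) x := ((hq1.differentiable one_ne_zero) x).hasDerivAt
    exact (hA.mul hwd).mul hqd
  -- pointwise key identity
  have key : ∀ x, ShatR w p x * q x - ShatR w q x * q x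
      = (deriv p x / p x - deriv q x / q x) ^ 2 * q x * w x + deriv g x := by
    intro x
    rw [(hgderiv x).deriv]
    have hpx := hpne x
    have hqx := hqne x
    simp only [ShatR]
    field_simp
    ring
  -- integrability facts
  have hSp_cont : Continuous (ShatR w p) := by
    have c1 : Continuous (deriv (deriv p)) := hp'.continuous_deriv le_rfl
    have c2 : Continuous (deriv p) := hp'.continuous
    have c3 : Continuous p := hp1.continuous
    have c4 : Continuous (deriv w) := hw.continuous_deriv le_rfl
    exact (((continuous_const.mul (c1.div c3 hpne)).mul hw.continuous).sub
      (((c2.div c3 hpne).pow 2).mul hw.continuous)).add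
      ((continuous_const.mul (c2.div c3 hpne)).mul c4)
  have hSq_cont : Continuous (ShatR w q) := by
    have c1 : Continuous (deriv (deriv q)) := hq'.continuous_deriv le_rfl
    have c2 : Continuous (deriv q) := hq'.continuous
    have c3 : Continuous q := hq1.continuous
    have c4 : Continuous (deriv w) := hw.continuous_deriv le_rfl
    exact (((continuous_const.mul (c1.div c3 hqne)).mul hw.continuous).sub
      (((c2.div c3 hqne).pow 2).mul hw.continuous)).add
      ((continuous_const.mul (c2.div c3 hqne)).mul c4)
  have hSsupp : ∀ f : ℝ → ℝ, (∀ x, f x ≠ 0) → ContDiff ℝ 2 f →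
      HasCompactSupport (ShatR w f) := by
    intro f hfne hf
    have : ShatR w f = (fun x => 2 * (deriv (deriv f) x / f x)
          - (deriv f x / f x) ^ 2) * w
        + (fun x => 2 * (deriv f x / f x)) * deriv w := by
      funext x
      simp only [Pi.add_apply, Pi.mul_apply, ShatR]
      ring
    rw [this]
    exact (hwsupp.mul_left).add ((hwsupp.deriv).mul_left)
  have hint1 : Integrable (fun x => ShatR w p x * q x) := by
    have : HasCompactSupport (fun x => ShatR w p x * q x) :=
      (hSsupp p hpne hp).mul_right
    exact (hSp_cont.mul hq1.continuous).integrable_of_hasCompactSupport this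
  have hint2 : Integrable (fun x => ShatR w q x * q x) := by
    have : HasCompactSupport (fun x => ShatR w q x * q x) :=
      (hSsupp q hqne hq).mul_right
    exact (hSq_cont.mul hq1.continuous).integrable_of_hasCompactSupport this
  have hTcont : Continuous
      (fun x => (deriv p x / p x - deriv q x / q x) ^ 2 * q x * w x) :=
    ((((hp'.continuous.div hp1.continuous hpne).sub
        (hq'.continuous.div hq1.continuous hqne)).pow 2).mul hq1.continuous).mul
      hw.continuous
  have hTsupp : HasCompactSupport
      (fun x => (deriv p x / p x - deriv q x / q x) ^ 2 * q x * w x) := by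
    have : (fun x => (deriv p x / p x - deriv q x / q x) ^ 2 * q x * w x)
        = (fun x => (deriv p x / p x - deriv q x / q x) ^ 2 * q x) * w := rfl
    rw [this]
    exact hwsupp.mul_left
  have hintT : Integrable
      (fun x => (deriv p x / p x - deriv q x / q x) ^ 2 * q x * w x) :=
    hTcont.integrable_of_hasCompactSupport hTsupp
  have hintD : Integrable (deriv g) :=
    (hgC.continuous_deriv le_rfl).integrable_of_hasCompactSupport hgsupp.deriv
  -- ∫ deriv g = 0
  have hD0 : ∫ x, deriv g x = 0 := by
    rw [← intervalIntegral.integral_Iic_add_Ioi (b := (0:ℝ)) hintD.integrableOn hintD.integrableOn,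
      hgsupp.integral_Iic_deriv_eq hgC, hgsupp.integral_Ioi_deriv_eq hgC]
    ring
  constructor
  · calc (∫ x, ShatR w p x * q x) - (∫ x, ShatR w q x * q x)
        = ∫ x, (ShatR w p x * q x - ShatR w q x * q x) := (integral_sub hint1 hint2).symm
      _ = ∫ x, ((deriv p x / p x - deriv q x / q x) ^ 2 * q x * w x + deriv g x) := by
          congr 1; funext x; exact key x
      _ = (∫ x, (deriv p x / p x - deriv q x / q x) ^ 2 * q x * w x) + ∫ x, deriv g x :=
          integral_add hintT hintD
      _ = ∫ x, (deriv p x / p x - deriv q x / q x) ^ 2 * q x * w x := by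
          rw [hD0, add_zero]
  · exact integral_nonneg fun x =>
      mul_nonneg (mul_nonneg (sq_nonneg _) (hqpos x).le) (hwpos x)

end
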